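/- Let H be a Hilbert space and W1, W2 bounded operators on H with W1+W2 injective, ran(W1−W2) ⊆ ran(W1+W2), and V the unique bounded operator with [W1, W2] = (1/2)(W1+W2)[I+V, I−V]. Then W2 W1* + W1 W2* ≥ 0 if and only if V V* ≤ I. -/

import Mathlib

open ContinuousLinearMap in
private theorem aux_op_id {H : Type*} [NormedAddCommGroup H] [InnerProductSpace ℂ H]
    [CompleteSpace H] (S V : H →L[ℂ] H) :
    (((1/2:ℂ) • S) ∘L (1 - V)) ∘L adjoint (((1/2:ℂ) • S) ∘L (1 + V))
      + (((1/2:ℂ) • S) ∘L (1 + V)) ∘L adjoint (((1/2:ℂ) • S) ∘L (1 - V))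
      = (1/2:ℂ) • (S ∘L ((1 - V ∘L adjoint V) ∘L adjoint S)) := by
  have hadj : ∀ (c : ℂ) (A : H →L[ℂ] H), adjoint (c • A) = (starRingEnd ℂ c) • adjoint A := by
    intro c A; exact map_smulₛₗ (adjoint : (H →L[ℂ] H) ≃ₗᵢ⋆[ℂ] (H →L[ℂ] H)) c A
  have h1 : adjoint (1 : H →L[ℂ] H) = 1 := by
    rw [ContinuousLinearMap.one_def, adjoint_id]
  have hc : (starRingEnd ℂ) (1/2) = (1/2:ℂ) := by simp [Complex.ext_iff]
  simp only [adjoint_comp, hadj, map_add, map_sub, h1, hc]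
  simp only [← mul_def]
  noncomm_ring
  module

open ContinuousLinearMap in
private theorem aux_pt_id {H : Type*} [NormedAddCommGroup H] [InnerProductSpace ℂ H]
    [CompleteSpace H] (S V : H →L[ℂ] H) (x : H) :
    (inner ℂ x (((1/2:ℂ) • (S ∘L ((1 - V ∘L adjoint V) ∘L adjoint S))) x) : ℂ).re
      = (1/2) * ((inner ℂ (adjoint S x) (adjoint S x) : ℂ).re
          - (inner ℂ (adjoint S x) ((V ∘L adjoint V) (adjoint S x)) : ℂ).re) := by
  simp only [ContinuousLinearMap.smul_apply, inner_smul_right, comp_apply]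
  rw [← adjoint_inner_left S]
  simp only [ContinuousLinearMap.sub_apply, ContinuousLinearMap.one_apply, inner_sub_right,
    comp_apply]
  simp [Complex.mul_re, Complex.div_re]

open ContinuousLinearMap in
/-- `W2 W1* + W1 W2* ≥ 0` iff `V V* ≤ I` for the `V` from the factorization. -/
theorem pos_iff_contraction {H : Type*} [NormedAddCommGroup H]
    [InnerProductSpace ℂ H] [CompleteSpace H]
    (W1 W2 V : H →L[ℂ] H) (hinj : Function.Injective (W1 + W2))
    (hran : Set.range ⇑(W1 - W2) ⊆ Set.range ⇑(W1 + W2))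
    (hV1 : W1 = ((1/2 : ℂ) • (W1 + W2)) ∘L (1 + V))
    (hV2 : W2 = ((1/2 : ℂ) • (W1 + W2)) ∘L (1 - V)) :
    (∀ x : H, 0 ≤ (inner ℂ x ((W2 ∘L adjoint W1 + W1 ∘L adjoint W2) x) : ℂ).re) ↔
      (∀ x : H, (inner ℂ x ((V ∘L adjoint V) x) : ℂ).re ≤ (inner ℂ x x : ℂ).re) := by
  have key : W2 ∘L adjoint W1 + W1 ∘L adjoint W2
      = (1/2:ℂ) • ((W1 + W2) ∘L ((1 - V ∘L adjoint V) ∘L adjoint (W1 + W2))) := by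
    obtain ⟨S, hS⟩ : ∃ S, S = W1 + W2 := ⟨_, rfl⟩
    rw [← hS] at hV1 hV2 ⊢
    conv_lhs => rw [hV1, hV2]
    exact aux_op_id S V
  have key2 : ∀ x : H, (inner ℂ x ((W2 ∘L adjoint W1 + W1 ∘L adjoint W2) x) : ℂ).re
      = (1/2) * ((inner ℂ (adjoint (W1 + W2) x) (adjoint (W1 + W2) x) : ℂ).re
          - (inner ℂ (adjoint (W1 + W2) x) ((V ∘L adjoint V) (adjoint (W1 + W2) x)) : ℂ).re) := by
    intro x
    rw [key]
    exact aux_pt_id (W1 + W2) V x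
  constructor
  · intro h y
    have hrange : ∀ z ∈ LinearMap.range (adjoint (W1 + W2) : H →ₗ[ℂ] H),
        (inner ℂ z ((V ∘L adjoint V) z) : ℂ).re ≤ (inner ℂ z z : ℂ).re := by
      rintro z ⟨x, rfl⟩
      have := h x
      rw [key2 x] at this
      simp only [ContinuousLinearMap.coe_coe] at *
      linarith
    set K : Submodule ℂ H := LinearMap.range (adjoint (W1 + W2) : H →ₗ[ℂ] H) with hK
    have hKbot : Kᗮ = ⊥ := by
      rw [Submodule.eq_bot_iff]
      intro z hz
      have hSz : (W1 + W2) z = 0 := by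
        have h1 : (inner ℂ ((W1 + W2) z) ((W1 + W2) z) : ℂ) = 0 := by
          rw [← adjoint_inner_left (W1 + W2)]
          exact (hz _ ⟨(W1 + W2) z, rfl⟩)
        exact inner_self_eq_zero.mp h1
      have h2 : (W1 + W2) z = (W1 + W2) 0 := by simpa using hSz
      exact hinj h2
    have hdense : Dense (K : Set H) := by
      have ht := Submodule.topologicalClosure_eq_top_iff.mpr hKbot
      have : (K.topologicalClosure : Set H) = Set.univ := by rw [ht]; rfl
      rw [Dense]
      intro x
      have hsub : (K.topologicalClosure : Set H) ⊆ closure (K : Set H) :=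
        Submodule.topologicalClosure_coe K ▸ le_refl _
      exact hsub (this ▸ Set.mem_univ x)
    -- continuity argument
    have hcont1 : Continuous fun z : H => (inner ℂ z ((V ∘L adjoint V) z) : ℂ).re :=
      Complex.continuous_re.comp (continuous_inner.comp
        (continuous_id.prodMk (V ∘L adjoint V).continuous))
    have hcont2 : Continuous fun z : H => (inner ℂ z z : ℂ).re :=
      Complex.continuous_re.comp (continuous_inner.comp (continuous_id.prodMk continuous_id))
    have hclosed : IsClosed {z : H | (inner ℂ z ((V ∘L adjoint V) z) : ℂ).re ≤ (inner ℂ z z : ℂ).re} :=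
      isClosed_le hcont1 hcont2
    have hsubset : (K : Set H) ⊆
        {z : H | (inner ℂ z ((V ∘L adjoint V) z) : ℂ).re ≤ (inner ℂ z z : ℂ).re} := fun z hz =>
      hrange z hz
    have := hclosed.closure_subset_iff.mpr hsubset
    exact this (hdense.closure_eq ▸ Set.mem_univ y)
  · intro h x
    rw [key2 x]
    have := h (adjoint (W1 + W2) x)
    linarith
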